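/- If P is a projection whose rank and corank are both at least 2, then there exists a projection Q commuting with P such that the second commutant {P, Q}'' within the set of projections has exactly 16 elements. -/
import Mathlib


open Matrix ComplexOrder

/-- The set of `n × n` Hermitian projections. -/
def ProjSet (n : ℕ) : Set (Matrix (Fin n) (Fin n) ℂ) :=
  {P | P.IsHermitian ∧ P * P = P}

/-- The commutant of a set of projections within the set of projections. -/
def ProjComm {n : ℕ} (S : Set (Matrix (Fin n) (Fin n) ℂ)) : Set (Matrix (Fin n) (Fin n) ℂ) :=
  {R ∈ ProjSet n | ∀ Q ∈ S, R * Q = Q * R}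

namespace Sixteen

variable {n : ℕ}

/-- 0/1-valued complex function from a boolean function. -/
def pc (p : Fin n → Bool) : Fin n → ℂ := fun i => if p i then 1 else 0

lemma pc_eq_iff {p : Fin n → Bool} {i j : Fin n} (h : pc p i = pc p j) : p i = p j := by
  unfold pc at h
  cases hpi : p i <;> cases hpj : p j <;> simp [hpi, hpj] at h ⊢

/-- A 0/1 diagonal matrix is a Hermitian projection. -/
lemma diag01_mem {v : Fin n → ℂ} (hv : ∀ i, v i = 0 ∨ v i = 1) :
    diagonal v ∈ ProjSet n := by
  have hs : star v = v := by
    funext i; rcases hv i with h | h <;> simp [Pi.star_apply, h]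
  have hm : (fun i => v i * v i) = v := by
    funext i; rcases hv i with h | h <;> simp [h]
  exact ⟨by rw [Matrix.IsHermitian, Matrix.diagonal_conjTranspose, hs],
    by rw [Matrix.diagonal_mul_diagonal, hm]⟩

lemma pc_mem (p : Fin n → Bool) : diagonal (pc p) ∈ ProjSet n := by
  apply diag01_mem
  intro i
  unfold pc
  by_cases h : p i <;> simp [h]

/-- The 16 candidate elements of the second commutant. -/
noncomputable def gdiag (p q : Fin n → Bool) (f : Bool × Bool → Bool) :
    Matrix (Fin n) (Fin n) ℂ :=
  diagonal (fun i => if f (p i, q i) then 1 else 0)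

lemma gdiag_mem (p q : Fin n → Bool) (f : Bool × Bool → Bool) :
    gdiag p q f ∈ ProjSet n := by
  apply diag01_mem
  intro i
  by_cases h : f (p i, q i) <;> simp [h]

/-- Commuting with a diagonal matrix, entrywise. -/
lemma commute_diag_iff {R : Matrix (Fin n) (Fin n) ℂ} {v : Fin n → ℂ} :
    R * diagonal v = diagonal v * R ↔ ∀ i j, R i j * v j = v i * R i j := by
  constructor
  · intro h i j
    have := congrFun (congrFun h i) j
    rwa [Matrix.mul_diagonal, Matrix.diagonal_mul] at this
  · intro h
    ext i j
    rw [Matrix.mul_diagonal, Matrix.diagonal_mul]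
    exact h i j

/-- Any projection commuting with the two diagonal projections commutes with each `gdiag`. -/
lemma gdiag_commutes (p q : Fin n → Bool) (f : Bool × Bool → Bool)
    {R : Matrix (Fin n) (Fin n) ℂ}
    (hp : R * diagonal (pc p) = diagonal (pc p) * R)
    (hq : R * diagonal (pc q) = diagonal (pc q) * R) :
    R * gdiag p q f = gdiag p q f * R := by
  rw [commute_diag_iff] at hp hq
  unfold gdiag
  rw [commute_diag_iff]
  intro i j
  by_cases hR : R i j = 0
  · simp [hR]
  · have hpij : p i = p j := by
      have h1 : pc p j * R i j = pc p i * R i j := by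
        rw [mul_comm]; exact hp i j
      exact (pc_eq_iff (mul_right_cancel₀ hR h1)).symm
    have hqij : q i = q j := by
      have h1 : pc q j * R i j = pc q i * R i j := by
        rw [mul_comm]; exact hq i j
      exact (pc_eq_iff (mul_right_cancel₀ hR h1)).symm
    rw [hpij, hqij, mul_comm]

/-- Standard basis diagonal projection `E_i`. -/
noncomputable def Ei (i : Fin n) : Matrix (Fin n) (Fin n) ℂ :=
  diagonal (fun k => if k = i then 1 else 0)

lemma Ei_mem_comm (p q : Fin n → Bool) (i : Fin n) :
    Ei i ∈ ProjComm {diagonal (pc p), diagonal (pc q)} := by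
  refine ⟨diag01_mem fun k => by by_cases h : k = i <;> simp [h], ?_⟩
  intro Q hQ
  have hdiag : ∀ v : Fin n → ℂ, Ei i * diagonal v = diagonal v * Ei i := by
    intro v
    unfold Ei
    have hvv : (fun k => (if k = i then (1:ℂ) else 0) * v k)
        = fun k => v k * if k = i then 1 else 0 := by
      funext k; ring
    rw [Matrix.diagonal_mul_diagonal, Matrix.diagonal_mul_diagonal, hvv]
  rcases hQ with h | h <;> subst h <;> exact hdiag _

/-- Two-index mixing projection. -/
noncomputable def Mij (i j : Fin n) : Matrix (Fin n) (Fin n) ℂ :=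
  Matrix.of fun a b => if (a = i ∨ a = j) ∧ (b = i ∨ b = j) then (1/2 : ℂ) else 0

lemma Mij_apply (i j a b : Fin n) :
    Mij i j a b = if (a = i ∨ a = j) ∧ (b = i ∨ b = j) then (1/2 : ℂ) else 0 := rfl

lemma Mij_mem_comm (p q : Fin n → Bool) {i j : Fin n} (hij : i ≠ j)
    (hpij : p i = p j) (hqij : q i = q j) :
    Mij i j ∈ ProjComm {diagonal (pc p), diagonal (pc q)} := by
  have hherm : (Mij i j).IsHermitian := by
    ext a b
    simp only [Matrix.conjTranspose_apply, Mij_apply]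
    by_cases h : (b = i ∨ b = j) ∧ (a = i ∨ a = j)
    · rw [if_pos h, if_pos ⟨h.2, h.1⟩]
      norm_num
    · rw [if_neg h, if_neg (fun hc => h ⟨hc.2, hc.1⟩)]
      simp
  have hsum : ∀ (g : Fin n → ℂ), (∀ k, k ≠ i → k ≠ j → g k = 0) →
      ∑ k, g k = g i + g j := by
    intro g hg
    have : ∀ k, g k = (if k = i then g i else 0) + (if k = j then g j else 0) := by
      intro k
      by_cases hki : k = i
      · subst hki
        simp [Ne.symm, hij]
      · by_cases hkj : k = j
        · subst hkj; simp [hki]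
        · simp [hki, hkj, hg k hki hkj]
    calc ∑ k, g k = ∑ k, ((if k = i then g i else 0) + (if k = j then g j else 0)) := by
          exact Finset.sum_congr rfl fun k _ => this k
      _ = g i + g j := by
          rw [Finset.sum_add_distrib, Finset.sum_ite_eq', Finset.sum_ite_eq']
          simp
  have hidem : Mij i j * Mij i j = Mij i j := by
    ext a b
    rw [Matrix.mul_apply]
    rw [hsum (fun k => Mij i j a k * Mij i j k b) ?_]
    · by_cases ha : a = i ∨ a = j <;> by_cases hb : b = i ∨ b = j <;>
        simp [Mij_apply, ha, hb] <;> norm_num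
    · intro k hki hkj
      simp [Mij_apply, hki, hkj]
  have hcomm : ∀ v : Fin n → ℂ, v i = v j →
      Mij i j * diagonal v = diagonal v * Mij i j := by
    intro v hv
    rw [commute_diag_iff]
    intro a b
    by_cases h : (a = i ∨ a = j) ∧ (b = i ∨ b = j)
    · have hva : v a = v i := by
        rcases h.1 with h' | h'
        · rw [h']
        · rw [h']; exact hv.symm
      have hvb : v b = v i := by
        rcases h.2 with h' | h'
        · rw [h']
        · rw [h']; exact hv.symm
      rw [hva, hvb, mul_comm]
    · simp [Mij_apply, h]
  refine ⟨⟨hherm, hidem⟩, ?_⟩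
  intro Q hQ
  rcases hQ with h | h <;> subst h
  · exact hcomm _ (by unfold pc; rw [hpij])
  · exact hcomm _ (by unfold pc; rw [hqij])

open Classical in
/-- The second commutant in the diagonal case. -/
lemma second_comm_eq (p q : Fin n → Bool)
    (hb : ∀ b : Bool × Bool, ∃ i, p i = b.1 ∧ q i = b.2) :
    ProjComm (ProjComm {diagonal (pc p), diagonal (pc q)}) = Set.range (gdiag p q) := by
  ext R
  constructor
  · rintro ⟨⟨hherm, hidem⟩, hcomm⟩
    -- R is diagonal
    have hdiag : ∀ a b : Fin n, a ≠ b → R a b = 0 := by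
      intro a b hab
      have h := hcomm (Ei b) (Ei_mem_comm p q b)
      have := congrFun (congrFun h a) b
      unfold Ei at this
      rw [Matrix.mul_diagonal, Matrix.diagonal_mul] at this
      simpa [hab] using this
    set d : Fin n → ℂ := fun i => R i i with hd
    have hRd : R = diagonal d := by
      ext a b
      by_cases hab : a = b
      · subst hab; simp [Matrix.diagonal_apply_eq, hd]
      · rw [Matrix.diagonal_apply_ne _ hab]
        exact hdiag a b hab
    -- diagonal entries are 0 or 1
    have h01 : ∀ i, d i = 0 ∨ d i = 1 := by
      intro i
      have hx := congrFun (congrFun hidem i) i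
      rw [hRd, Matrix.diagonal_mul_diagonal] at hx
      simp only [Matrix.diagonal_apply_eq] at hx
      have hz : d i * (d i - 1) = 0 := by linear_combination hx
      rcases mul_eq_zero.mp hz with h | h
      · exact Or.inl h
      · exact Or.inr (by linear_combination h)
    -- same block ⇒ equal diagonal entries
    have hblock : ∀ i j : Fin n, p i = p j → q i = q j → d i = d j := by
      intro i j hpij hqij
      by_cases hij : i = j
      · rw [hij]
      · have h := hcomm (Mij i j) (Mij_mem_comm p q hij hpij hqij)
        have h2 := congrFun (congrFun h i) j
        rw [hRd, Matrix.diagonal_mul, Matrix.mul_diagonal] at h2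
        rw [Mij_apply] at h2
        simp only [true_or, or_true, true_and, and_self, if_true] at h2
        have h3 : d i * (1/2 : ℂ) = (1/2 : ℂ) * d j := by simpa using h2
        field_simp at h3
        exact h3
    choose w hw1 hw2 using hb
    refine ⟨fun b => if d (w b) = 1 then true else false, ?_⟩
    have hfun : ∀ i : Fin n,
        (if (if d (w (p i, q i)) = 1 then true else false) = true then (1:ℂ) else 0) = d i := by
      intro i
      have hdw : d i = d (w (p i, q i)) :=
        hblock _ _ (hw1 (p i, q i)).symm (hw2 (p i, q i)).symm
      rcases h01 (w (p i, q i)) with h | h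
      · rw [hdw, h]; norm_num
      · rw [hdw, h]; norm_num
    rw [hRd]
    unfold gdiag
    exact congrArg Matrix.diagonal (funext hfun)
  · rintro ⟨f, rfl⟩
    refine ⟨gdiag_mem p q f, ?_⟩
    rintro Q ⟨_, hQcomm⟩
    exact (gdiag_commutes p q f
      (hQcomm _ (Set.mem_insert _ _)) (hQcomm _ (Set.mem_insert_of_mem _ rfl))).symm

open Classical in
lemma diag_card (p q : Fin n → Bool)
    (hb : ∀ b : Bool × Bool, ∃ i, p i = b.1 ∧ q i = b.2) :
    (ProjComm (ProjComm {diagonal (pc p), diagonal (pc q)})).ncard = 16 := by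
  rw [second_comm_eq p q hb]
  have hinj : Function.Injective (gdiag p q (n := n)) := by
    intro f f' h
    funext b
    obtain ⟨i, hpi, hqi⟩ := hb b
    have h2 : (if f (p i, q i) then (1:ℂ) else 0) = if f' (p i, q i) then 1 else 0 := by
      have := congrFun (congrFun h i) i
      simpa [gdiag, Matrix.diagonal_apply_eq] using this
    rw [hpi, hqi] at h2
    cases hf : f (b.1, b.2) <;> cases hf' : f' (b.1, b.2) <;>
      rw [hf, hf'] at h2 <;> simp_all
  rw [← Set.image_univ, Set.ncard_image_of_injective _ hinj, Set.ncard_univ,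
    Nat.card_eq_fintype_card]
  simp

section Conj

variable {U : Matrix (Fin n) (Fin n) ℂ}

/-- Conjugation by a unitary. -/
noncomputable def cnj (U M : Matrix (Fin n) (Fin n) ℂ) : Matrix (Fin n) (Fin n) ℂ :=
  U * M * star U

lemma cnj_mul (h1 : star U * U = 1) (A B : Matrix (Fin n) (Fin n) ℂ) :
    cnj U A * cnj U B = cnj U (A * B) := by
  unfold cnj
  calc U * A * star U * (U * B * star U) = U * A * (star U * U) * B * star U := by
        noncomm_ring
    _ = U * (A * B) * star U := by rw [h1]; noncomm_ring

lemma cnj_cnj (h1 : star U * U = 1) (A : Matrix (Fin n) (Fin n) ℂ) :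
    cnj (star U) (cnj U A) = A := by
  unfold cnj
  rw [star_star]
  calc star U * (U * A * star U) * U = (star U * U) * A * (star U * U) := by noncomm_ring
    _ = A := by rw [h1]; noncomm_ring

lemma cnj_projset (h1 : star U * U = 1) {A : Matrix (Fin n) (Fin n) ℂ}
    (hA : A ∈ ProjSet n) : cnj U A ∈ ProjSet n := by
  obtain ⟨hh, hi⟩ := hA
  constructor
  · unfold cnj
    rw [Matrix.IsHermitian, Matrix.conjTranspose_mul, Matrix.conjTranspose_mul]
    rw [show (star U)ᴴ = star Uᴴ from rfl]
    rw [Matrix.star_eq_conjTranspose, Matrix.conjTranspose_conjTranspose, hh]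
    noncomm_ring
  · rw [cnj_mul h1, hi]

lemma cnj_mem_projcomm (h1 : star U * U = 1) {S : Set (Matrix (Fin n) (Fin n) ℂ)}
    {R : Matrix (Fin n) (Fin n) ℂ} (hR : R ∈ ProjComm S) :
    cnj U R ∈ ProjComm (cnj U '' S) := by
  obtain ⟨hRp, hRc⟩ := hR
  refine ⟨cnj_projset h1 hRp, ?_⟩
  rintro Q' ⟨Q, hQ, rfl⟩
  rw [cnj_mul h1, cnj_mul h1, hRc Q hQ]

lemma cnj_image_image (h1 : star U * U = 1) (S : Set (Matrix (Fin n) (Fin n) ℂ)) :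
    cnj (star U) '' (cnj U '' S) = S := by
  rw [Set.image_image]
  have : (fun A => cnj (star U) (cnj U A)) = id := by
    funext A; exact cnj_cnj h1 A
  rw [this, Set.image_id]

lemma projcomm_image (h1 : star U * U = 1) (h2 : U * star U = 1)
    (S : Set (Matrix (Fin n) (Fin n) ℂ)) :
    ProjComm (cnj U '' S) = cnj U '' ProjComm S := by
  have h1' : star (star U) * star U = 1 := by rwa [star_star]
  ext R
  constructor
  · intro hR
    have hmem := cnj_mem_projcomm h1' hR
    rw [cnj_image_image h1 S] at hmem
    have hrt : cnj (star (star U)) (cnj (star U) R) = R :=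
      cnj_cnj (by rwa [star_star]) R
    rw [star_star] at hrt
    exact ⟨cnj (star U) R, hmem, hrt⟩
  · rintro ⟨R₀, hR₀, rfl⟩
    exact cnj_mem_projcomm h1 hR₀

lemma cnj_injective (h1 : star U * U = 1) :
    Function.Injective (cnj U (n := n)) := by
  intro A B h
  have hA := cnj_cnj h1 A
  have hB := cnj_cnj h1 B
  rw [← hA, ← hB, h]

lemma diag_mul_comm (v w : Fin n → ℂ) :
    diagonal v * diagonal w = diagonal w * diagonal v := by
  rw [Matrix.diagonal_mul_diagonal, Matrix.diagonal_mul_diagonal]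
  apply congrArg
  funext i
  ring

end Conj

end Sixteen

theorem second_commutant_card_sixteen {n : ℕ} (hn : 4 ≤ n)
    {P : Matrix (Fin n) (Fin n) ℂ}
    (hP : P ∈ ProjSet n) (hrk : 2 ≤ P.rank) (hcork : 2 ≤ n - P.rank) :
    ∃ Q ∈ ProjSet n, P * Q = Q * P ∧
      (ProjComm (ProjComm {P, Q})).ncard = 16 := by
  classical
  obtain ⟨hherm, hidem⟩ := hP
  set U : Matrix (Fin n) (Fin n) ℂ :=
    ((Matrix.IsHermitian.eigenvectorUnitary hherm : Matrix.unitaryGroup (Fin n) ℂ) :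
      Matrix (Fin n) (Fin n) ℂ) with hUdef
  have hUmem := (Matrix.IsHermitian.eigenvectorUnitary hherm).prop
  rw [Unitary.mem_iff] at hUmem
  obtain ⟨h1, h2⟩ := hUmem
  set ev := hherm.eigenvalues with hev
  have hspec : P = Sixteen.cnj U (diagonal (RCLike.ofReal ∘ ev)) := hherm.spectral_theorem
  have hDidem : (diagonal (RCLike.ofReal ∘ ev) : Matrix (Fin n) (Fin n) ℂ)
        * diagonal (RCLike.ofReal ∘ ev)
      = diagonal (RCLike.ofReal ∘ ev) := by
    apply Sixteen.cnj_injective h1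
    rw [← Sixteen.cnj_mul h1, ← hspec]
    exact hidem
  rw [Matrix.diagonal_mul_diagonal] at hDidem
  have hev01 : ∀ i, ev i = 0 ∨ ev i = 1 := by
    intro i
    have h := congrFun (congrFun hDidem i) i
    simp only [Matrix.diagonal_apply_eq, Function.comp_apply] at h
    have h' : ev i * ev i = ev i := by exact_mod_cast h
    have hz : ev i * (ev i - 1) = 0 := by linear_combination h'
    rcases mul_eq_zero.mp hz with h0 | h0
    · exact Or.inl h0
    · exact Or.inr (by linarith)
  set p : Fin n → Bool := fun i => if ev i = 1 then true else false with hp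
  have hpd : RCLike.ofReal ∘ ev = Sixteen.pc p := by
    funext i
    rcases hev01 i with h0 | h0 <;>
      simp [Sixteen.pc, hp, h0, Function.comp_apply]
  rw [hpd] at hspec
  -- rank bookkeeping
  have hrank := hherm.rank_eq_card_non_zero_eigs
  have hcardT : Fintype.card {i // p i = true} = P.rank := by
    rw [hrank]
    apply Fintype.card_congr
    apply Equiv.subtypeEquivRight
    intro i
    rw [← hev]
    rcases hev01 i with h0 | h0 <;> simp [hp, h0]
  have hcardF : Fintype.card {i // p i = false} = n - P.rank := by
    rw [← hcardT]
    have hiff : ∀ i : Fin n, (p i = false) ↔ ¬ (p i = true) := by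
      intro i; cases p i <;> simp
    rw [Fintype.card_congr (Equiv.subtypeEquivRight hiff),
      Fintype.card_subtype_compl]
    simp
  have hT2 : 1 < Fintype.card {i // p i = true} := by rw [hcardT]; omega
  have hF2 : 1 < Fintype.card {i // p i = false} := by rw [hcardF]; omega
  obtain ⟨i0, i1, hi01⟩ := Fintype.exists_pair_of_one_lt_card hT2
  obtain ⟨j0, j1, hj01⟩ := Fintype.exists_pair_of_one_lt_card hF2
  set q : Fin n → Bool :=
    fun i => if i = (i0 : Fin n) ∨ i = (j0 : Fin n) then true else false with hq
  have hTF : ∀ (x : {i // p i = true}) (y : {i // p i = false}), (x : Fin n) ≠ y := by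
    intro x y h
    have hx := x.prop
    rw [h, y.prop] at hx
    cases hx
  have hblocks : ∀ b : Bool × Bool, ∃ i, p i = b.1 ∧ q i = b.2 := by
    rintro ⟨b1, b2⟩
    cases b1 <;> cases b2
    · exact ⟨j1, j1.prop, by
        simp [hq, (hTF i0 j1).symm,
          Subtype.coe_ne_coe.mpr hj01.symm]⟩
    · exact ⟨j0, j0.prop, by simp [hq]⟩
    · exact ⟨i1, i1.prop, by
        simp [hq, Subtype.coe_ne_coe.mpr hi01.symm, hTF i1 j0]⟩
    · exact ⟨i0, i0.prop, by simp [hq]⟩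
  refine ⟨Sixteen.cnj U (diagonal (Sixteen.pc q)),
    Sixteen.cnj_projset h1 (Sixteen.pc_mem q), ?_, ?_⟩
  · rw [hspec, Sixteen.cnj_mul h1, Sixteen.cnj_mul h1, Sixteen.diag_mul_comm]
  · have hPQ : ({P, Sixteen.cnj U (diagonal (Sixteen.pc q))} :
        Set (Matrix (Fin n) (Fin n) ℂ)) =
        Sixteen.cnj U '' {diagonal (Sixteen.pc p), diagonal (Sixteen.pc q)} := by
      rw [Set.image_insert_eq, Set.image_singleton, hspec]
    rw [hPQ, Sixteen.projcomm_image h1 h2, Sixteen.projcomm_image h1 h2,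
      Set.ncard_image_of_injective _ (Sixteen.cnj_injective h1),
      Sixteen.diag_card p q hblocks]
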